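/- Assume q ≡ 1 (mod 4). Let M_{ii} be an integer, g = g_{ξχ^{M_{ii}}}, and n_i the multiplicative order of the character ξχ^{M_{ii}}. For an integer K, let Γ(x, K) be the n_i × n_i matrix over the field ℂ(x) of rational functions, with rows and columns indexed by ℤ/n_i, whose entries are: Γ_{k,ℓ}(x,K) = (qx/g)^{1−n_i} if k ≡ ℓ ≡ 1 + K − k (mod n_i); otherwise Γ_{k,k}(x,K) = (qx/g)^{1−((K+1−2k) % n_i)} · (1 − q)/(1 − q(qx/g)^{n_i}); Γ_{k,ℓ}(x,K) = (ξχ^{M_{ii}})^{ℓ(1+K)}(−1) · g_{(ξχ^{M_{ii}})^{2k−K−1}} · (qx/g) · (1 − (qx/g)^{−n_i})/(1 − q(qx/g)^{n_i}) whenever ℓ ≡ 1 + K − k (mod n_i) and ℓ ≢ k (mod n_i); and Γ_{k,ℓ}(x,K) = 0 in all other cases (here m % n_i denotes the least nonnegative residue of m modulo n_i). Then Γ(x, K) · Γ(g²/(q²x), K) is the n_i × n_i identity matrix, where Γ(g²/(q²x), K) is obtained from Γ(x, K) by substituting g²/(q²x) for x. -/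

import Mathlib

open Polynomial
open scoped Classical

noncomputable section

namespace MDS

/-- The power residue symbol `(f/g)_ψ = ψ(Res(f, g/b))`, where `b` is the leading coefficient of
`g`: the resultant of `f` against the monic polynomial `g/b` equals the norm of the residue class
of `f` in `F[T]/(g)`. -/
def resSym (F : Type) [Field F] (ψ : MulChar F ℂ) (f g : Polynomial F) : ℂ :=
  ψ (Algebra.norm F (Ideal.Quotient.mk (Ideal.span {g}) f))

/-- The coefficient of `T⁻¹` in the expansion of `u/v` as a Laurent series in `T⁻¹`. -/
def cInv (F : Type) [Field F] (u v : Polynomial F) : F :=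
  ((u % v).coeff (v.natDegree - 1)) / v.leadingCoeff

/-- The additive character `e(a) = exp(2 π i Tr_{F/F_p}(a) / p)`. -/
def eChar (F : Type) [Field F] (p : ℕ) [CharP F p] (a : F) : ℂ :=
  letI : Algebra (ZMod p) F := (ZMod.castHom dvd_rfl F).toAlgebra
  Complex.exp (2 * Real.pi * Complex.I * ((Algebra.trace (ZMod p) F a).val : ℂ) / (p : ℂ))

/-- `e(u/v)`: the additive character applied to the coefficient of `T⁻¹` of `u/v`. -/
def eRat (F : Type) [Field F] (p : ℕ) [CharP F p] (u v : Polynomial F) : ℂ :=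
  eChar F p (cInv F u v)

/-- The finite field Gauss sum `g_ψ = ∑_{a ∈ F} ψ(a) e(a)`. -/
def gaussC (F : Type) [Field F] [Fintype F] (p : ℕ) [CharP F p] (ψ : MulChar F ℂ) : ℂ :=
  ∑ a : F, ψ a * eChar F p a

/-- The polynomial of degree `< d` with coefficients `c 0, …, c (d-1)`. -/
def polyLt (F : Type) [Field F] (d : ℕ) (c : Fin d → F) : Polynomial F :=
  ∑ k : Fin d, Polynomial.C (c k) * Polynomial.X ^ (k : ℕ)

/-- The monic polynomial `X^d + ∑ c k X^k` of degree `d`. -/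
def monicP (F : Type) [Field F] (d : ℕ) (c : Fin d → F) : Polynomial F :=
  Polynomial.X ^ d + polyLt F d c

/-- The function field Gauss sum `g_ψ(f₁, f₂) = ∑_{h mod f₂} (h/f₂)_ψ e(h f₁ / f₂)`, where the
residues `h` modulo `f₂` are parametrised by the polynomials of degree `< deg f₂`. -/
def gaussFF (F : Type) [Field F] [Fintype F] (p : ℕ) [CharP F p]
    (ψ : MulChar F ℂ) (f₁ f₂ : Polynomial F) : ℂ :=
  ∑ c : Fin f₂.natDegree → F,
    resSym F ψ (polyLt F f₂.natDegree c) f₂ * eRat F p (polyLt F f₂.natDegree c * f₁) f₂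

/-- The `n_i × n_i` scattering matrix `Γ(t, K)` over `ℂ(x)`, indexed by `ℤ/n_i`, with the
variable `x` replaced by an arbitrary rational function `t` (so that substitution of `x` is
evaluation of the same formulas at `t`). -/
def Gam (F : Type) [Field F] [Fintype F] (p : ℕ) [CharP F p]
    (ψ : MulChar F ℂ) (ni : ℕ) (K : ℤ) (t : RatFunc ℂ) :
    Matrix (ZMod ni) (ZMod ni) (RatFunc ℂ) :=
  Matrix.of fun k ℓ =>
    let q : ℂ := (Fintype.card F : ℂ)
    let g : ℂ := gaussC F p ψ
    let y : RatFunc ℂ := RatFunc.C q * t / RatFunc.C g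
    if ℓ = k ∧ k = 1 + (K : ZMod ni) - k then
      y ^ (1 - (ni : ℤ))
    else if ℓ = k then
      y ^ (1 - (K + 1 - 2 * (ZMod.val k : ℤ)) % (ni : ℤ)) *
        (RatFunc.C (1 - q) / (1 - RatFunc.C q * y ^ (ni : ℕ)))
    else if ℓ = 1 + (K : ZMod ni) - k then
      RatFunc.C (((ψ (-1)) ^ ((ZMod.val ℓ : ℤ) * (1 + K))) *
          gaussC F p (ψ ^ (2 * (ZMod.val k : ℤ) - K - 1))) *
        y * ((1 - y ^ (-(ni : ℤ))) / (1 - RatFunc.C q * y ^ (ni : ℕ)))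
    else 0

/-! ### Auxiliary lemmas -/

section Aux

lemma sub_ne (L : Type*) [Field L] {Q A : L} (hA : A ≠ 0) (hD' : 1 - Q * A⁻¹ ≠ 0) :
    A - Q ≠ 0 := by
  intro h
  have hQ : Q = A := by linear_combination -h
  apply hD'; rw [hQ, mul_inv_cancel₀ hA, sub_self]

lemma keyDiag {L : Type*} [Field L] (Q c1 c2 A Y y : L) (hY : Y ≠ 0) (hy : y ≠ 0) (hA : A ≠ 0)
    (hD : 1 - Q * A ≠ 0) (hD' : 1 - Q * A⁻¹ ≠ 0) (hc : c1 * c2 = Q) :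
    Y * ((1 - Q) / (1 - Q * A)) * (Y⁻¹ * ((1 - Q) / (1 - Q * A⁻¹))) +
      c1 * y * ((1 - A⁻¹) / (1 - Q * A)) * (c2 * y⁻¹ * ((1 - A) / (1 - Q * A⁻¹))) = 1 := by
  have hAQ := sub_ne L hA hD'
  subst hc
  field_simp
  ring

lemma keyOff {L : Type*} [Field L] (Q c A P S y : L) (hy : y ≠ 0) (hA : A ≠ 0)
    (hD : 1 - Q * A ≠ 0) (hD' : 1 - Q * A⁻¹ ≠ 0) (hPS : y * S = A * (P * y⁻¹)) :
    P * ((1 - Q) / (1 - Q * A)) * (c * y⁻¹ * ((1 - A) / (1 - Q * A⁻¹))) +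
      c * y * ((1 - A⁻¹) / (1 - Q * A)) * (S * ((1 - Q) / (1 - Q * A⁻¹))) = 0 := by
  have hAQ := sub_ne L hA hD'
  have h : S = A * P * y⁻¹ * y⁻¹ := by
    field_simp at hPS ⊢
    linear_combination hPS
  subst h
  field_simp
  ring

lemma emod_add_emod_eq (ni : ℤ) (hni : 0 < ni) (x x' : ℤ) (hxx : ni ∣ x + x')
    (hx : ¬ ni ∣ x) (hx' : ¬ ni ∣ x') : x % ni + x' % ni = ni := by
  have h1 : ni ∣ (x % ni + x' % ni) := by
    obtain ⟨t, ht⟩ := hxx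
    refine ⟨t - (x / ni + x' / ni), ?_⟩
    rw [Int.emod_def, Int.emod_def]
    linear_combination ht
  obtain ⟨s, hs⟩ := h1
  have hr1 : 0 ≤ x % ni := Int.emod_nonneg x hni.ne'
  have hr2 : x % ni < ni := Int.emod_lt_of_pos x hni
  have hr3 : 0 ≤ x' % ni := Int.emod_nonneg x' hni.ne'
  have hr4 : x' % ni < ni := Int.emod_lt_of_pos x' hni
  have hz1 : x % ni ≠ 0 := fun h => hx (Int.dvd_of_emod_eq_zero h)
  have hz2 : x' % ni ≠ 0 := fun h => hx' (Int.dvd_of_emod_eq_zero h)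
  have hpos : 0 < x % ni + x' % ni := by omega
  rw [hs] at hpos
  have hs0 : 0 < s := by
    rcases le_or_gt s 0 with h | h
    · nlinarith
    · exact h
  have hs2 : s < 2 := by
    rcases lt_or_ge s 2 with h | h
    · exact h
    · nlinarith
  have hs1 : s = 1 := by omega
  rw [hs, hs1, mul_one]

lemma yinv_eq (qc g : ℂ) (hCq : RatFunc.C qc ≠ 0) (hCg : RatFunc.C g ≠ 0)
    (hX0 : (RatFunc.X : RatFunc ℂ) ≠ 0) :
    RatFunc.C qc * (RatFunc.C (g ^ 2) / (RatFunc.C (qc ^ 2) * RatFunc.X)) / RatFunc.C g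
      = (RatFunc.C qc * RatFunc.X / RatFunc.C g)⁻¹ := by
  rw [map_pow, map_pow]
  field_simp

lemma zpow_shift {L : Type*} [Field L] (y : L) (hy : y ≠ 0) (ni : ℕ) (r r' : ℤ)
    (h : r + r' = (ni : ℤ)) :
    y * (y ^ ((1 : ℤ) - r'))⁻¹ = y ^ (ni : ℕ) * (y ^ ((1 : ℤ) - r) * y⁻¹) := by
  rw [← zpow_natCast y ni, ← zpow_neg, ← zpow_neg_one y,
    show y * y ^ (-(1 - r')) = y ^ (1 : ℤ) * y ^ (-(1 - r')) from by rw [zpow_one],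
    ← zpow_add₀ hy, ← zpow_add₀ hy, ← zpow_add₀ hy]
  congr 1
  omega

end Aux

section Infra

set_option linter.unusedSectionVars false

variable (F : Type) [Field F] [Fintype F] (p : ℕ) [CharP F p]

def eAdd (hp : p.Prime) : AddChar F ℂ :=
  letI : Fact p.Prime := ⟨hp⟩
  letI : Algebra (ZMod p) F := (ZMod.castHom dvd_rfl F).toAlgebra
  letI : NeZero p := ⟨hp.ne_zero⟩
  (AddChar.zmodChar p (((Complex.isPrimitiveRoot_exp p hp.ne_zero)).pow_eq_one)).compAddMonoidHom
    (Algebra.trace (ZMod p) F).toAddMonoidHom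

lemma eChar_eq (hp : p.Prime) (a : F) : eChar F p a = eAdd F p hp a := by
  letI : Fact p.Prime := ⟨hp⟩
  letI : Algebra (ZMod p) F := (ZMod.castHom dvd_rfl F).toAlgebra
  letI : NeZero p := ⟨hp.ne_zero⟩
  rw [eChar, eAdd]
  rw [AddChar.compAddMonoidHom_apply, AddChar.zmodChar_apply,
    LinearMap.toAddMonoidHom_coe, ← Complex.exp_nat_mul]
  ring_nf

lemma eAdd_primitive (hp : p.Prime) : (eAdd F p hp).IsPrimitive := by
  letI : Fact p.Prime := ⟨hp⟩
  letI : Algebra (ZMod p) F := (ZMod.castHom dvd_rfl F).toAlgebra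
  letI : NeZero p := ⟨hp.ne_zero⟩
  haveI : Module.Finite (ZMod p) F := Module.Finite.of_finite
  haveI : Algebra.IsSeparable (ZMod p) F := by infer_instance
  apply AddChar.IsPrimitive.of_ne_one
  obtain ⟨a, ha⟩ := Algebra.trace_surjective (ZMod p) F 1
  intro h
  have h1 : eAdd F p hp a = 1 := by rw [h]; rfl
  rw [eAdd, AddChar.compAddMonoidHom_apply, AddChar.zmodChar_apply,
    LinearMap.toAddMonoidHom_coe, ha] at h1
  have hv : ((1 : ZMod p)).val = 1 := ZMod.val_one p
  rw [hv, pow_one] at h1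
  exact (Complex.isPrimitiveRoot_exp p hp.ne_zero).ne_one hp.one_lt h1

lemma gaussC_eq (hp : p.Prime) (χ : MulChar F ℂ) :
    gaussC F p χ = gaussSum χ (eAdd F p hp) := by
  unfold gaussC gaussSum
  exact Finset.sum_congr rfl fun a _ => by rw [eChar_eq F p hp]

lemma gaussC_mul (hp : p.Prime) {χ : MulChar F ℂ} (hχ : χ ≠ 1) :
    gaussC F p χ * gaussC F p χ⁻¹ = χ (-1) * (Fintype.card F : ℂ) := by
  rw [gaussC_eq F p hp, gaussC_eq F p hp,
    ← mul_gaussSum_inv_eq_gaussSum χ⁻¹ (eAdd F p hp)]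
  have h := gaussSum_mul_gaussSum_eq_card hχ (eAdd_primitive F p hp)
  rw [MulChar.inv_apply', inv_neg, inv_one]
  linear_combination χ (-1) * h

lemma neg_one_sq_eq_one (χ : MulChar F ℂ) : χ (-1) * χ (-1) = 1 := by
  rw [← map_mul]; norm_num

lemma zpow_apply_neg_one (χ : MulChar F ℂ) (z : ℤ) : (χ ^ z) (-1) = χ (-1) ^ z := by
  cases z with
  | ofNat n =>
    rw [Int.ofNat_eq_coe, zpow_natCast, zpow_natCast]
    rcases Nat.eq_zero_or_pos n with h | h
    · subst h; simp [MulChar.one_apply (isUnit_one.neg)]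
    · exact MulChar.pow_apply' χ h.ne' _
  | negSucc n =>
    rw [zpow_negSucc, zpow_negSucc, MulChar.inv_apply_eq_inv',
      MulChar.pow_apply' χ (Nat.succ_ne_zero n)]

lemma gaussC_mul_of_dvd (hp : p.Prime) {ψ : MulChar F ℂ} {ni : ℕ} (hni : orderOf ψ = ni)
    (a b : ℤ) (hab : (ni : ℤ) ∣ a + b) (ha : ¬ (ni : ℤ) ∣ a) :
    gaussC F p (ψ ^ a) * gaussC F p (ψ ^ b) = ψ (-1) ^ a * (Fintype.card F : ℂ) := by
  have hinv : ψ ^ b = (ψ ^ a)⁻¹ := by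
    apply eq_inv_of_mul_eq_one_left
    rw [← zpow_add]
    obtain ⟨m, hm⟩ := hab
    rw [show b + a = a + b by ring, hm, zpow_mul, zpow_natCast, ← hni, pow_orderOf_eq_one,
      one_zpow]
  have hne : ψ ^ a ≠ 1 := by
    rw [Ne, ← orderOf_dvd_iff_zpow_eq_one, hni]; exact ha
  rw [hinv, gaussC_mul F p hp hne, zpow_apply_neg_one]

lemma const_mul (hp : p.Prime) (ψ : MulChar F ℂ) (ni : ℕ) [NeZero ni]
    (hni : orderOf ψ = ni) (K : ℤ) (k ℓ₀ : ZMod ni)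
    (hl : ℓ₀ = 1 + (K : ZMod ni) - k) (hkl : k ≠ ℓ₀) :
    (ψ (-1) ^ ((ZMod.val ℓ₀ : ℤ) * (1 + K)) *
        gaussC F p (ψ ^ (2 * (ZMod.val k : ℤ) - K - 1))) *
      (ψ (-1) ^ ((ZMod.val k : ℤ) * (1 + K)) *
        gaussC F p (ψ ^ (2 * (ZMod.val ℓ₀ : ℤ) - K - 1))) = (Fintype.card F : ℂ) := by
  have hdvd : (ni : ℤ) ∣ ((ZMod.val k : ℤ) + (ZMod.val ℓ₀ : ℤ) - (1 + K)) := by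
    rw [← ZMod.intCast_zmod_eq_zero_iff_dvd]
    push_cast
    simp only [ZMod.natCast_val, ZMod.intCast_cast, ZMod.cast_id]
    rw [hl]; ring
  have hna : ¬ (ni : ℤ) ∣ (2 * (ZMod.val k : ℤ) - K - 1) := by
    intro hai
    apply hkl
    have h0 : (((2 * (ZMod.val k : ℤ) - K - 1 : ℤ)) : ZMod ni) = 0 :=
      (ZMod.intCast_zmod_eq_zero_iff_dvd _ _).2 hai
    push_cast at h0
    simp only [ZMod.natCast_val, ZMod.intCast_cast, ZMod.cast_id] at h0
    rw [hl]
    linear_combination h0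
  have hab : (ni : ℤ) ∣ (2 * (ZMod.val k : ℤ) - K - 1) + (2 * (ZMod.val ℓ₀ : ℤ) - K - 1) := by
    obtain ⟨m, hm⟩ := hdvd
    exact ⟨2 * m, by linear_combination 2 * hm⟩
  have hgauss := gaussC_mul_of_dvd F p hp hni _ _ hab hna
  have hu2 : ψ (-1) * ψ (-1) = 1 := neg_one_sq_eq_one F ψ
  have hu0 : ψ (-1) ≠ 0 := fun h => by simp [h] at hu2
  have hun : ψ (-1) ^ (ni : ℤ) = 1 := by
    rw [zpow_natCast, ← MulChar.pow_apply' ψ (NeZero.ne ni), ← hni, pow_orderOf_eq_one,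
      MulChar.one_apply isUnit_one.neg]
  obtain ⟨m, hm⟩ := hdvd
  obtain ⟨c, hcc⟩ := Int.even_mul_succ_self K
  have step : (ψ (-1) ^ ((ZMod.val ℓ₀ : ℤ) * (1 + K)) *
        gaussC F p (ψ ^ (2 * (ZMod.val k : ℤ) - K - 1))) *
      (ψ (-1) ^ ((ZMod.val k : ℤ) * (1 + K)) *
        gaussC F p (ψ ^ (2 * (ZMod.val ℓ₀ : ℤ) - K - 1))) =
      ψ (-1) ^ ((ZMod.val ℓ₀ : ℤ) * (1 + K) + (ZMod.val k : ℤ) * (1 + K) +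
        (2 * (ZMod.val k : ℤ) - K - 1)) * (Fintype.card F : ℂ) := by
    rw [zpow_add₀ hu0, zpow_add₀ hu0]
    linear_combination (ψ (-1) ^ ((ZMod.val ℓ₀ : ℤ) * (1 + K)) *
      ψ (-1) ^ ((ZMod.val k : ℤ) * (1 + K))) * hgauss
  rw [step]
  have hT : (ZMod.val ℓ₀ : ℤ) * (1 + K) + (ZMod.val k : ℤ) * (1 + K) +
      (2 * (ZMod.val k : ℤ) - K - 1) = 2 * (c + (ZMod.val k : ℤ)) + (ni : ℤ) * (m * (1 + K)) := by
    linear_combination (1 + K) * hm + hcc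
  rw [hT, zpow_add₀ hu0, zpow_mul, zpow_mul, hun, one_zpow,
    show (ψ (-1)) ^ (2 : ℤ) = 1 by rw [zpow_two]; exact hu2, one_zpow, one_mul, one_mul]

end Infra

section GamApply
set_option linter.unusedSectionVars false
variable (F : Type) [Field F] [Fintype F] (p : ℕ) [CharP F p]
variable (ψ : MulChar F ℂ) (ni : ℕ) (K : ℤ) (t : RatFunc ℂ) (k ℓ : ZMod ni)

lemma Gam_fix (h : k = 1 + (K : ZMod ni) - k) :
    Gam F p ψ ni K t k k =
      (RatFunc.C ((Fintype.card F : ℂ)) * t / RatFunc.C (gaussC F p ψ)) ^ (1 - (ni : ℤ)) := by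
  simp only [Gam, Matrix.of_apply]
  split_ifs <;> first | rfl | tauto

lemma Gam_diag (h : k ≠ 1 + (K : ZMod ni) - k) :
    Gam F p ψ ni K t k k =
      (RatFunc.C ((Fintype.card F : ℂ)) * t / RatFunc.C (gaussC F p ψ)) ^
          (1 - (K + 1 - 2 * (ZMod.val k : ℤ)) % (ni : ℤ)) *
        (RatFunc.C (1 - (Fintype.card F : ℂ)) /
          (1 - RatFunc.C ((Fintype.card F : ℂ)) *
            (RatFunc.C ((Fintype.card F : ℂ)) * t / RatFunc.C (gaussC F p ψ)) ^ (ni : ℕ))) := by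
  simp only [Gam, Matrix.of_apply]
  split_ifs <;> first | rfl | tauto

lemma Gam_off (h1 : ℓ ≠ k) (h2 : ℓ = 1 + (K : ZMod ni) - k) :
    Gam F p ψ ni K t k ℓ =
      RatFunc.C (((ψ (-1)) ^ ((ZMod.val ℓ : ℤ) * (1 + K))) *
          gaussC F p (ψ ^ (2 * (ZMod.val k : ℤ) - K - 1))) *
        (RatFunc.C ((Fintype.card F : ℂ)) * t / RatFunc.C (gaussC F p ψ)) *
        ((1 - (RatFunc.C ((Fintype.card F : ℂ)) * t / RatFunc.C (gaussC F p ψ)) ^ (-(ni : ℤ))) /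
          (1 - RatFunc.C ((Fintype.card F : ℂ)) *
            (RatFunc.C ((Fintype.card F : ℂ)) * t / RatFunc.C (gaussC F p ψ)) ^ (ni : ℕ))) := by
  simp only [Gam, Matrix.of_apply]
  split_ifs <;> first | rfl | tauto

lemma Gam_zero (h1 : ℓ ≠ k) (h2 : ℓ ≠ 1 + (K : ZMod ni) - k) :
    Gam F p ψ ni K t k ℓ = 0 := by
  simp only [Gam, Matrix.of_apply]
  split_ifs <;> first | rfl | tauto

end GamApply

/-- `Γ(x, K) ⋅ Γ(g²/(q²x), K)` is the identity matrix, where `g = g_{ξχ^{M_{ii}}}`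
and `n_i` is the multiplicative order of `ξχ^{M_{ii}}`. -/
theorem statement_8
    (F : Type) [Field F] [Fintype F] (p : ℕ) (hp : p.Prime) [CharP F p]
    (hq : Odd (Fintype.card F)) (hq4 : Fintype.card F % 4 = 1)
    (χ : MulChar F ℂ) (n : ℕ) (hn : orderOf χ = n) (hneven : Even n) (hnpos : 0 < n)
    (ξ : MulChar F ℂ) (hξ : orderOf ξ = 2)
    (Mii : ℤ) (ni : ℕ) [NeZero ni] (hni : ni = orderOf (ξ * χ ^ Mii)) (K : ℤ) :
    Gam F p (ξ * χ ^ Mii) ni K RatFunc.X *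
      Gam F p (ξ * χ ^ Mii) ni K
        (RatFunc.C ((gaussC F p (ξ * χ ^ Mii)) ^ 2) /
          (RatFunc.C ((Fintype.card F : ℂ) ^ 2) * RatFunc.X)) = 1 := by
  have hCinj : Function.Injective (RatFunc.C : ℂ →+* RatFunc ℂ) := RingHom.injective _
  have hq0 : (Fintype.card F : ℂ) ≠ 0 := Nat.cast_ne_zero.2 Fintype.card_ne_zero
  have hX0 : (RatFunc.X : RatFunc ℂ) ≠ 0 := RatFunc.X_ne_zero
  have hCq : RatFunc.C (Fintype.card F : ℂ) ≠ 0 := fun h => hq0 (hCinj (by rw [h, map_zero]))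
  by_cases hone : ni = 1
  · subst hone
    ext k ℓ
    have hkl : ℓ = k := Subsingleton.elim ℓ k
    have hfix : k = 1 + (K : ZMod 1) - k := Subsingleton.elim _ _
    rw [Matrix.mul_apply,
      show (Finset.univ : Finset (ZMod 1)) = {k} from
        Finset.eq_singleton_iff_unique_mem.2 ⟨Finset.mem_univ k, fun x _ => Subsingleton.elim x k⟩,
      Finset.sum_singleton, hkl,
      Gam_fix F p _ 1 K RatFunc.X k hfix, Gam_fix F p _ 1 K _ k hfix]
    norm_num [Matrix.one_apply_eq]
  · -- general case: `ni ≥ 2`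
    have hni2 : 2 ≤ ni := by have := NeZero.ne ni; omega
    have hψord : orderOf (ξ * χ ^ Mii) = ni := hni.symm
    have hψ1 : (ξ * χ ^ Mii) ≠ 1 := by
      intro h; rw [h, orderOf_one] at hψord; omega
    have hu2 : (ξ * χ ^ Mii) (-1) * (ξ * χ ^ Mii) (-1) = 1 := neg_one_sq_eq_one F _
    have hu0 : (ξ * χ ^ Mii) (-1) ≠ 0 := fun h => by simp [h] at hu2
    have hg0 : gaussC F p (ξ * χ ^ Mii) ≠ 0 := by
      intro h
      have hgg := gaussC_mul F p hp hψ1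
      rw [h, zero_mul] at hgg
      exact (mul_ne_zero hu0 hq0) hgg.symm
    have hCg : RatFunc.C (gaussC F p (ξ * χ ^ Mii)) ≠ 0 :=
      fun h => hg0 (hCinj (by rw [h, map_zero]))
    have hy0 : RatFunc.C (Fintype.card F : ℂ) * RatFunc.X /
        RatFunc.C (gaussC F p (ξ * χ ^ Mii)) ≠ 0 :=
      div_ne_zero (mul_ne_zero hCq hX0) hCg
    have hyinv := yinv_eq (Fintype.card F : ℂ) (gaussC F p (ξ * χ ^ Mii)) hCq hCg hX0
    have hXC : ∀ c : ℂ, (RatFunc.X : RatFunc ℂ) ^ ni ≠ RatFunc.C c := by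
      intro c h
      have h2 : (algebraMap (Polynomial ℂ) (RatFunc ℂ)) (X ^ ni) =
          algebraMap (Polynomial ℂ) (RatFunc ℂ) (Polynomial.C c) := by
        rw [map_pow, RatFunc.algebraMap_X, RatFunc.algebraMap_C]; exact h
      have h3 := IsFractionRing.injective (Polynomial ℂ) (RatFunc ℂ) h2
      have h4 := congrArg Polynomial.natDegree h3
      rw [natDegree_X_pow, natDegree_C] at h4
      omega
    have hb0 : (Fintype.card F : ℂ) / gaussC F p (ξ * χ ^ Mii) ≠ 0 := div_ne_zero hq0 hg0
    have hyXb : RatFunc.C (Fintype.card F : ℂ) * RatFunc.X /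
        RatFunc.C (gaussC F p (ξ * χ ^ Mii)) =
        RatFunc.C ((Fintype.card F : ℂ) / gaussC F p (ξ * χ ^ Mii)) * RatFunc.X := by
      rw [map_div₀]
      field_simp
    have hA0 : (RatFunc.C (Fintype.card F : ℂ) * RatFunc.X /
        RatFunc.C (gaussC F p (ξ * χ ^ Mii))) ^ (ni : ℕ) ≠ 0 := pow_ne_zero _ hy0
    have hD : 1 - RatFunc.C (Fintype.card F : ℂ) *
        (RatFunc.C (Fintype.card F : ℂ) * RatFunc.X /
          RatFunc.C (gaussC F p (ξ * χ ^ Mii))) ^ (ni : ℕ) ≠ 0 := by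
      intro h
      have h5 : RatFunc.C ((Fintype.card F : ℂ) *
          ((Fintype.card F : ℂ) / gaussC F p (ξ * χ ^ Mii)) ^ ni) * RatFunc.X ^ ni = 1 := by
        rw [map_mul, map_pow]
        rw [hyXb, mul_pow] at h
        linear_combination -h
      apply hXC (((Fintype.card F : ℂ) *
          ((Fintype.card F : ℂ) / gaussC F p (ξ * χ ^ Mii)) ^ ni)⁻¹)
      rw [map_inv₀]
      exact eq_inv_of_mul_eq_one_left (by linear_combination h5)
    have hD' : 1 - RatFunc.C (Fintype.card F : ℂ) *
        ((RatFunc.C (Fintype.card F : ℂ) * RatFunc.X /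
          RatFunc.C (gaussC F p (ξ * χ ^ Mii))) ^ (ni : ℕ))⁻¹ ≠ 0 := by
      intro h
      have h1 : RatFunc.C (Fintype.card F : ℂ) /
          (RatFunc.C (Fintype.card F : ℂ) * RatFunc.X /
            RatFunc.C (gaussC F p (ξ * χ ^ Mii))) ^ (ni : ℕ) = 1 := by
        rw [div_eq_mul_inv]; linear_combination -h
      have h2 := (div_eq_one_iff_eq hA0).1 h1
      apply hXC ((Fintype.card F : ℂ) /
        ((Fintype.card F : ℂ) / gaussC F p (ξ * χ ^ Mii)) ^ ni)
      rw [map_div₀, map_pow, eq_div_iff (pow_ne_zero _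
        (fun hh => hb0 (hCinj (by rw [hh, map_zero]))))]
      rw [hyXb, mul_pow] at h2
      linear_combination -h2
    ext k ℓ
    set ℓ₀ : ZMod ni := 1 + (K : ZMod ni) - k with hl0def
    rw [Matrix.mul_apply]
    rw [← Finset.sum_subset (Finset.subset_univ {k, ℓ₀}) (fun x _ hx => by
      simp only [Finset.mem_insert, Finset.mem_singleton, not_or] at hx
      rw [Gam_zero F p (ξ * χ ^ Mii) ni K RatFunc.X k x hx.1
        (fun hh => hx.2 (by rw [hl0def]; exact hh)), zero_mul])]
    by_cases hkf : k = ℓ₀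
    · rw [show ({k, ℓ₀} : Finset (ZMod ni)) = {k} from by
        rw [← hkf]; exact Finset.insert_eq_self.2 (Finset.mem_singleton_self k)]
      rw [Finset.sum_singleton]
      have hkfix : k = 1 + (K : ZMod ni) - k := by rw [← hl0def]; exact hkf
      by_cases hlk : ℓ = k
      · subst hlk
        rw [Gam_fix F p _ ni K RatFunc.X ℓ hkfix, Gam_fix F p _ ni K _ ℓ hkfix]
        rw [hyinv, Matrix.one_apply_eq, inv_zpow]
        exact mul_inv_cancel₀ (zpow_ne_zero _ hy0)
      · rw [Gam_zero F p _ ni K _ k ℓ hlk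
          (fun hh => hlk (by rw [← hl0def] at hh; exact hh.trans hkf.symm)),
          mul_zero, Matrix.one_apply_ne (fun h => hlk h.symm)]
    · have hl0k : ℓ₀ ≠ k := fun h => hkf h.symm
      have hbk : 1 + (K : ZMod ni) - ℓ₀ = k := by rw [hl0def]; ring
      have hl0fix : ℓ₀ ≠ 1 + (K : ZMod ni) - ℓ₀ := by rw [hbk]; exact hl0k
      have hkfix : k ≠ 1 + (K : ZMod ni) - k := by rw [← hl0def]; exact hkf
      have hdvd : (ni : ℤ) ∣ ((ZMod.val k : ℤ) + (ZMod.val ℓ₀ : ℤ) - (1 + K)) := by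
        rw [← ZMod.intCast_zmod_eq_zero_iff_dvd]
        push_cast
        simp only [ZMod.natCast_val, ZMod.intCast_cast, ZMod.cast_id]
        rw [hl0def]; ring
      have hnd : ¬ (ni : ℤ) ∣ (K + 1 - 2 * (ZMod.val k : ℤ)) := by
        intro hai
        apply hkf
        have h0 : (((K + 1 - 2 * (ZMod.val k : ℤ) : ℤ)) : ZMod ni) = 0 :=
          (ZMod.intCast_zmod_eq_zero_iff_dvd _ _).2 hai
        push_cast at h0
        simp only [ZMod.natCast_val, ZMod.intCast_cast, ZMod.cast_id] at h0
        rw [hl0def]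
        linear_combination -h0
      have hnd' : ¬ (ni : ℤ) ∣ (K + 1 - 2 * (ZMod.val ℓ₀ : ℤ)) := by
        intro hai
        apply hl0fix
        have h0 : (((K + 1 - 2 * (ZMod.val ℓ₀ : ℤ) : ℤ)) : ZMod ni) = 0 :=
          (ZMod.intCast_zmod_eq_zero_iff_dvd _ _).2 hai
        push_cast at h0
        simp only [ZMod.natCast_val, ZMod.intCast_cast, ZMod.cast_id] at h0
        linear_combination -h0
      have hrr : (K + 1 - 2 * (ZMod.val k : ℤ)) % (ni : ℤ) +
          (K + 1 - 2 * (ZMod.val ℓ₀ : ℤ)) % (ni : ℤ) = (ni : ℤ) := by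
        apply emod_add_emod_eq _ (by positivity) _ _ _ hnd hnd'
        obtain ⟨m, hm⟩ := hdvd
        exact ⟨-2 * m, by linear_combination -2 * hm⟩
      have hcc : RatFunc.C ((ξ * χ ^ Mii) (-1) ^ ((ZMod.val ℓ₀ : ℤ) * (1 + K)) *
            gaussC F p ((ξ * χ ^ Mii) ^ (2 * (ZMod.val k : ℤ) - K - 1))) *
          RatFunc.C ((ξ * χ ^ Mii) (-1) ^ ((ZMod.val k : ℤ) * (1 + K)) *
            gaussC F p ((ξ * χ ^ Mii) ^ (2 * (ZMod.val ℓ₀ : ℤ) - K - 1))) =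
          RatFunc.C (Fintype.card F : ℂ) := by
        rw [← map_mul]
        exact congrArg RatFunc.C (const_mul F p hp (ξ * χ ^ Mii) ni hψord K k ℓ₀ hl0def hkf)
      rw [Finset.sum_pair hkf]
      by_cases hlk : ℓ = k
      · subst hlk
        rw [Gam_diag F p _ ni K RatFunc.X ℓ hkfix, Gam_diag F p _ ni K _ ℓ hkfix,
          Gam_off F p _ ni K RatFunc.X ℓ ℓ₀ hl0k hl0def,
          Gam_off F p _ ni K _ ℓ₀ ℓ hkf hbk.symm]
        rw [hyinv, Matrix.one_apply_eq]
        simp only [inv_zpow, inv_pow, zpow_neg, inv_inv, zpow_natCast]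
        simp only [map_sub, map_one]
        exact keyDiag _ _ _ _ _ _ (zpow_ne_zero _ hy0) hy0 hA0 hD hD' hcc
      · by_cases hll : ℓ = ℓ₀
        · subst hll
          rw [Gam_diag F p _ ni K RatFunc.X k hkfix,
            Gam_off F p _ ni K _ k ℓ₀ hlk hl0def,
            Gam_off F p _ ni K RatFunc.X k ℓ₀ hlk hl0def,
            Gam_diag F p _ ni K _ ℓ₀ hl0fix]
          rw [hyinv, Matrix.one_apply_ne hkf]
          simp only [inv_zpow, inv_pow, zpow_neg, inv_inv, zpow_natCast]
          simp only [map_sub, map_one]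
          refine keyOff _ _ _ _ _ _ hy0 hA0 hD hD' ?_
          exact zpow_shift _ hy0 ni _ _ hrr
        · rw [Gam_zero F p _ ni K _ k ℓ hlk (fun hh => hll (by rw [hl0def]; exact hh)),
            Gam_zero F p _ ni K _ ℓ₀ ℓ hll (fun hh => hlk (by rw [hbk] at hh; exact hh)),
            mul_zero, mul_zero, add_zero, Matrix.one_apply_ne (fun h => hlk h.symm)]

end MDS
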